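/- arXiv:2407.16683 — 3 statements merged into one kernel-verified Lean document; each statement's English description precedes it below -/
import Mathlib

section
/- Let V be a finite Gödel set. Then the equivalences Δ∀x A(x) ↔ ∀x ΔA(x) and Δ∃x A(x) ↔ ∃x ΔA(x) are valid in G_V^Δ, all classical quantifier-shift schemas are valid in G_V^Δ, and consequently every sentence of the Δ-extended language has a logically equivalent prenex sentence in G_V^Δ. -/
namespace GodelPaper

/-- A first-order language: function and relation symbols of each arity. -/
structure Lang where
  Func : ℕ → Type
  Rel : ℕ → Type

/-- A Gödel set: a closed subset of [0,1] containing 0 and 1. -/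
def GodelSet (V : Set ℝ) : Prop :=
  IsClosed V ∧ V ⊆ Set.Icc 0 1 ∧ (0:ℝ) ∈ V ∧ (1:ℝ) ∈ V

/-- Terms with variables from `α`. -/
inductive Term (L : Lang) (α : Type) : Type
  | var : α → Term L α
  | func : ∀ {k}, L.Func k → (Fin k → Term L α) → Term L α

/-- A `V`-interpretation: nonempty domain, interpretation of function symbols,
and truth values in `V` for atomic sentences with parameters. -/
structure Interp (L : Lang) (V : Set ℝ) where
  Dom : Type
  dom_nonempty : Nonempty Dom
  funMap : ∀ {k}, L.Func k → (Fin k → Dom) → Dom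
  relVal : ∀ {k}, L.Rel k → (Fin k → Dom) → ℝ
  relVal_mem : ∀ {k} (R : L.Rel k) (v : Fin k → Dom), relVal R v ∈ V

def Term.eval {L : Lang} {V : Set ℝ} (I : Interp L V) {α : Type} (v : α → I.Dom) :
    Term L α → I.Dom
  | .var i => v i
  | .func f ts => I.funMap f fun j => Term.eval I v (ts j)

/-- Formulas of the Δ-extended language, with free variables among `Fin n`.
The quantifiers bind the *last* variable. Δ-free formulas (i.e. formulas of the
plain language) are singled out by the predicate `DeltaFree` below. -/
inductive Form (L : Lang) : ℕ → Type
  | falsum : ∀ {n}, Form L n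
  | atom : ∀ {n k}, L.Rel k → (Fin k → Term L (Fin n)) → Form L n
  | conj : ∀ {n}, Form L n → Form L n → Form L n
  | disj : ∀ {n}, Form L n → Form L n → Form L n
  | impl : ∀ {n}, Form L n → Form L n → Form L n
  | delta : ∀ {n}, Form L n → Form L n
  | all : ∀ {n}, Form L (n+1) → Form L n
  | ex : ∀ {n}, Form L (n+1) → Form L n

/-- The Gödel truth value of a formula under an interpretation and an
assignment of the free variables. -/
noncomputable def Form.val {L : Lang} {V : Set ℝ} (I : Interp L V) :
    ∀ {n}, Form L n → (Fin n → I.Dom) → ℝ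
  | _, .falsum, _ => 0
  | _, .atom R ts, ρ => I.relVal R fun j => Term.eval I ρ (ts j)
  | _, .conj A B, ρ => min (Form.val I A ρ) (Form.val I B ρ)
  | _, .disj A B, ρ => max (Form.val I A ρ) (Form.val I B ρ)
  | _, .impl A B, ρ => if Form.val I A ρ ≤ Form.val I B ρ then 1 else Form.val I B ρ
  | _, .delta A, ρ => if Form.val I A ρ = 1 then 1 else 0
  | _, .all A, ρ => sInf {v : ℝ | ∃ d : I.Dom, v = Form.val I A (Fin.snoc ρ d)}
  | _, .ex A, ρ => sSup {v : ℝ | ∃ d : I.Dom, v = Form.val I A (Fin.snoc ρ d)}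

/-- The value of a sentence. -/
noncomputable def Form.sval {L : Lang} {V : Set ℝ} (I : Interp L V) (A : Form L 0) : ℝ :=
  Form.val I A Fin.elim0

/-- `A` is valid in `G_V`. -/
def Valid {L : Lang} (V : Set ℝ) (A : Form L 0) : Prop :=
  ∀ I : Interp L V, Form.sval I A = 1

/-- `A` is 1-satisfiable in `G_V`. -/
def OneSat {L : Lang} (V : Set ℝ) (A : Form L 0) : Prop :=
  ∃ I : Interp L V, Form.sval I A = 1

/-- `A` is classically satisfiable: it takes value 1 under a `V`-interpretation
assigning only values in {0,1} to atomic sentences. -/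
def ClassSat {L : Lang} (V : Set ℝ) (A : Form L 0) : Prop :=
  ∃ I : Interp L V,
    (∀ {k : ℕ} (R : L.Rel k) (v : Fin k → I.Dom), I.relVal R v = 0 ∨ I.relVal R v = 1) ∧
    Form.sval I A = 1

/-- ¬A abbreviates A ⊃ ⊥. -/
def Form.not {L : Lang} {n : ℕ} (A : Form L n) : Form L n := Form.impl A Form.falsum

/-- A ↔ B abbreviates (A ⊃ B) ∧ (B ⊃ A). -/
def Form.iff {L : Lang} {n : ℕ} (A B : Form L n) : Form L n :=
  Form.conj (Form.impl A B) (Form.impl B A)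

/-- Formulas of the plain language (no Δ). -/
def DeltaFree {L : Lang} : ∀ {n}, Form L n → Prop
  | _, .falsum => True
  | _, .atom _ _ => True
  | _, .conj A B => DeltaFree A ∧ DeltaFree B
  | _, .disj A B => DeltaFree A ∧ DeltaFree B
  | _, .impl A B => DeltaFree A ∧ DeltaFree B
  | _, .delta _ => False
  | _, .all A => DeltaFree A
  | _, .ex A => DeltaFree A

/-- Quantifier-free formulas. -/
def QuantFree {L : Lang} : ∀ {n}, Form L n → Prop
  | _, .falsum => True
  | _, .atom _ _ => True
  | _, .conj A B => QuantFree A ∧ QuantFree B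
  | _, .disj A B => QuantFree A ∧ QuantFree B
  | _, .impl A B => QuantFree A ∧ QuantFree B
  | _, .delta A => QuantFree A
  | _, .all _ => False
  | _, .ex _ => False

/-- Formulas containing no universal quantifier. -/
def AllFree {L : Lang} : ∀ {n}, Form L n → Prop
  | _, .falsum => True
  | _, .atom _ _ => True
  | _, .conj A B => AllFree A ∧ AllFree B
  | _, .disj A B => AllFree A ∧ AllFree B
  | _, .impl A B => AllFree A ∧ AllFree B
  | _, .delta A => AllFree A
  | _, .all _ => False
  | _, .ex A => AllFree A

/-- Prenex formulas: a block of quantifiers followed by a quantifier-free matrix. -/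
inductive IsPrenex {L : Lang} : ∀ {n}, Form L n → Prop
  | qf {n} {A : Form L n} : QuantFree A → IsPrenex A
  | all {n} {A : Form L (n+1)} : IsPrenex A → IsPrenex (Form.all A)
  | ex {n} {A : Form L (n+1)} : IsPrenex A → IsPrenex (Form.ex A)

/-- Purely existential prenex formulas. -/
inductive ExPrenex {L : Lang} : ∀ {n}, Form L n → Prop
  | qf {n} {A : Form L n} : QuantFree A → ExPrenex A
  | ex {n} {A : Form L (n+1)} : ExPrenex A → ExPrenex (Form.ex A)

/-- The glued interpretation `I_ω`: atoms with value ≤ ω keep their value,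
all other atoms get value 1. Same domain and function interpretations. -/
noncomputable def Interp.glue {L : Lang} {V : Set ℝ} (I : Interp L V) (ω : ℝ)
    (h1 : (1:ℝ) ∈ V) : Interp L V where
  Dom := I.Dom
  dom_nonempty := I.dom_nonempty
  funMap := fun {k} f v => I.funMap f v
  relVal := fun {k} R v => if I.relVal R v ≤ ω then I.relVal R v else 1
  relVal_mem := fun {k} R v => by
    by_cases h : I.relVal R v ≤ ω
    · simpa [h] using I.relVal_mem R v
    · simpa [h] using h1

/-- The Gödel set `V_↑ = {1 - 1/k : k ≥ 1} ∪ {1}`. -/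
def Vup : Set ℝ := {x : ℝ | ∃ k : ℕ, 1 ≤ k ∧ x = 1 - 1/(k:ℝ)} ∪ {1}

/-- The `m`-element Gödel set `V_m = {1 - 1/k : 1 ≤ k ≤ m-1} ∪ {1}`. -/
def Vfin (m : ℕ) : Set ℝ :=
  {x : ℝ | ∃ k : ℕ, 1 ≤ k ∧ k ≤ m - 1 ∧ x = 1 - 1/(k:ℝ)} ∪ {1}

/-- Atomic formula built from a unary predicate. -/
def atom1 {L : Lang} (P : L.Rel 1) {n : ℕ} (t : Term L (Fin n)) : Form L n :=
  Form.atom P fun _ => t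

/-- Atomic formula built from a 0-ary predicate (propositional atom). -/
def atom0 {L : Lang} (X : L.Rel 0) {n : ℕ} : Form L n :=
  Form.atom X fun i => i.elim0

def Term.rename {L : Lang} {α β : Type} (f : α → β) : Term L α → Term L β
  | .var i => .var (f i)
  | .func g ts => .func g fun j => Term.rename f (ts j)

def Form.rename {L : Lang} : ∀ {m n}, (Fin m → Fin n) → Form L m → Form L n
  | _, _, _, .falsum => .falsum
  | _, _, f, .atom R ts => .atom R fun j => (ts j).rename f
  | _, _, f, .conj A B => .conj (A.rename f) (B.rename f)
  | _, _, f, .disj A B => .disj (A.rename f) (B.rename f)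
  | _, _, f, .impl A B => .impl (A.rename f) (B.rename f)
  | _, _, f, .delta A => .delta (A.rename f)
  | _, _, f, .all A =>
      .all (A.rename (Fin.lastCases (Fin.last _) fun i => Fin.castSucc (f i)))
  | _, _, f, .ex A =>
      .ex (A.rename (Fin.lastCases (Fin.last _) fun i => Fin.castSucc (f i)))

/-- Weakening: regard a formula with `n` free variables as one with `n+1`
free variables (not using the new last variable). -/
def Form.lift {L : Lang} {n : ℕ} (A : Form L n) : Form L (n+1) :=
  A.rename Fin.castSucc

def Term.subst {L : Lang} {α β : Type} (σ : α → Term L β) : Term L α → Term L β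
  | .var i => σ i
  | .func g ts => .func g fun j => Term.subst σ (ts j)

def Form.subst {L : Lang} : ∀ {m n}, (Fin m → Term L (Fin n)) → Form L m → Form L n
  | _, _, _, .falsum => .falsum
  | _, _, σ, .atom R ts => .atom R fun j => (ts j).subst σ
  | _, _, σ, .conj A B => .conj (A.subst σ) (B.subst σ)
  | _, _, σ, .disj A B => .disj (A.subst σ) (B.subst σ)
  | _, _, σ, .impl A B => .impl (A.subst σ) (B.subst σ)
  | _, _, σ, .delta A => .delta (A.subst σ)
  | _, _, σ, .all A =>
      .all (A.subst (Fin.lastCases (.var (Fin.last _))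
        fun i => (σ i).rename Fin.castSucc))
  | _, _, σ, .ex A =>
      .ex (A.subst (Fin.lastCases (.var (Fin.last _))
        fun i => (σ i).rename Fin.castSucc))

/-- The language `L ∪ {f}` with one new function symbol of arity `a`. -/
def Lang.addFunc (L : Lang) (a : ℕ) : Lang where
  Func := fun k => L.Func k ⊕ PLift (k = a)
  Rel := L.Rel

/-- The new function symbol of `L.addFunc a`. -/
def newFunc (L : Lang) (a : ℕ) : (L.addFunc a).Func a := Sum.inr ⟨rfl⟩

def Term.emb {L : Lang} {a : ℕ} {α : Type} : Term L α → Term (L.addFunc a) α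
  | .var i => .var i
  | .func g ts => .func (Sum.inl g) fun j => Term.emb (ts j)

/-- Embedding of `L`-formulas into the language with the extra function symbol. -/
def Form.emb {L : Lang} {a : ℕ} : ∀ {n}, Form L n → Form (L.addFunc a) n
  | _, .falsum => .falsum
  | _, .atom R ts => .atom R fun j => (ts j).emb
  | _, .conj A B => .conj A.emb B.emb
  | _, .disj A B => .disj A.emb B.emb
  | _, .impl A B => .impl A.emb B.emb
  | _, .delta A => .delta A.emb
  | _, .all A => .all A.emb
  | _, .ex A => .ex A.emb

/-- Prefix of `n` existential quantifiers (outermost quantifier binds variable 0). -/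
def Form.exN {L : Lang} : ∀ n, Form L n → Form L 0
  | 0, A => A
  | n+1, A => Form.exN n (Form.ex A)

/-- Prefix of `n` universal quantifiers (outermost quantifier binds variable 0). -/
def Form.allN {L : Lang} : ∀ n, Form L n → Form L 0
  | 0, A => A
  | n+1, A => Form.allN n (Form.all A)

section Dev
variable {L : Lang} {V : Set ℝ}

/-- Gödel implication as a function. -/
noncomputable def gimp (a b : ℝ) : ℝ := if a ≤ b then 1 else b

lemma val_impl (I : Interp L V) {n} (A B : Form L n) (ρ : Fin n → I.Dom) :
    Form.val I (.impl A B) ρ = gimp (Form.val I A ρ) (Form.val I B ρ) := rfl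

lemma val_mem (hV : GodelSet V) (hfin : V.Finite) (I : Interp L V) :
    ∀ {n} (A : Form L n) (ρ : Fin n → I.Dom), Form.val I A ρ ∈ V := by
  intro n A
  induction A with
  | falsum => intro ρ; exact hV.2.2.1
  | atom R ts => intro ρ; exact I.relVal_mem _ _
  | conj A B ihA ihB =>
      intro ρ; simp only [Form.val, min_def]; split
      · exact ihA ρ
      · exact ihB ρ
  | disj A B ihA ihB =>
      intro ρ; simp only [Form.val, max_def]; split
      · exact ihB ρ
      · exact ihA ρ
  | impl A B ihA ihB =>
      intro ρ; simp only [Form.val]; split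
      · exact hV.2.2.2
      · exact ihB ρ
  | delta A ih =>
      intro ρ; simp only [Form.val]; split
      · exact hV.2.2.2
      · exact hV.2.2.1
  | all A ih =>
      intro ρ
      have hsub : {v : ℝ | ∃ d, v = Form.val I A (Fin.snoc ρ d)} ⊆ V := by
        rintro v ⟨d, rfl⟩; exact ih _
      have hne : Set.Nonempty {v : ℝ | ∃ d, v = Form.val I A (Fin.snoc ρ d)} := by
        obtain ⟨d⟩ := I.dom_nonempty; exact ⟨_, d, rfl⟩
      simp only [Form.val]
      exact hsub (hne.csInf_mem (hfin.subset hsub))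
  | ex A ih =>
      intro ρ
      have hsub : {v : ℝ | ∃ d, v = Form.val I A (Fin.snoc ρ d)} ⊆ V := by
        rintro v ⟨d, rfl⟩; exact ih _
      have hne : Set.Nonempty {v : ℝ | ∃ d, v = Form.val I A (Fin.snoc ρ d)} := by
        obtain ⟨d⟩ := I.dom_nonempty; exact ⟨_, d, rfl⟩
      simp only [Form.val]
      exact hsub (hne.csSup_mem (hfin.subset hsub))

lemma val_le_one (hV : GodelSet V) (hfin : V.Finite) (I : Interp L V)
    {n} (A : Form L n) (ρ : Fin n → I.Dom) : Form.val I A ρ ≤ 1 :=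
  (hV.2.1 (val_mem hV hfin I A ρ)).2

lemma val_nonneg (hV : GodelSet V) (hfin : V.Finite) (I : Interp L V)
    {n} (A : Form L n) (ρ : Fin n → I.Dom) : 0 ≤ Form.val I A ρ :=
  (hV.2.1 (val_mem hV hfin I A ρ)).1

section Quant
variable (hV : GodelSet V) (hfin : V.Finite) (I : Interp L V)
include hV hfin

lemma exists_all_eq {n} (A : Form L (n+1)) (ρ : Fin n → I.Dom) :
    ∃ d, Form.val I (.all A) ρ = Form.val I A (Fin.snoc ρ d) := by
  have hsub : {v : ℝ | ∃ d, v = Form.val I A (Fin.snoc ρ d)} ⊆ V := by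
    rintro v ⟨d, rfl⟩; exact val_mem hV hfin I A _
  have hne : Set.Nonempty {v : ℝ | ∃ d, v = Form.val I A (Fin.snoc ρ d)} := by
    obtain ⟨d⟩ := I.dom_nonempty; exact ⟨_, d, rfl⟩
  exact hne.csInf_mem (hfin.subset hsub)

lemma exists_ex_eq {n} (A : Form L (n+1)) (ρ : Fin n → I.Dom) :
    ∃ d, Form.val I (.ex A) ρ = Form.val I A (Fin.snoc ρ d) := by
  have hsub : {v : ℝ | ∃ d, v = Form.val I A (Fin.snoc ρ d)} ⊆ V := by
    rintro v ⟨d, rfl⟩; exact val_mem hV hfin I A _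
  have hne : Set.Nonempty {v : ℝ | ∃ d, v = Form.val I A (Fin.snoc ρ d)} := by
    obtain ⟨d⟩ := I.dom_nonempty; exact ⟨_, d, rfl⟩
  exact hne.csSup_mem (hfin.subset hsub)

lemma all_le {n} (A : Form L (n+1)) (ρ : Fin n → I.Dom) (d : I.Dom) :
    Form.val I (.all A) ρ ≤ Form.val I A (Fin.snoc ρ d) := by
  have hsub : {v : ℝ | ∃ d, v = Form.val I A (Fin.snoc ρ d)} ⊆ V := by
    rintro v ⟨d, rfl⟩; exact val_mem hV hfin I A _
  exact csInf_le (hfin.subset hsub).bddBelow ⟨d, rfl⟩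

lemma le_ex {n} (A : Form L (n+1)) (ρ : Fin n → I.Dom) (d : I.Dom) :
    Form.val I A (Fin.snoc ρ d) ≤ Form.val I (.ex A) ρ := by
  have hsub : {v : ℝ | ∃ d, v = Form.val I A (Fin.snoc ρ d)} ⊆ V := by
    rintro v ⟨d, rfl⟩; exact val_mem hV hfin I A _
  exact le_csSup (hfin.subset hsub).bddAbove ⟨d, rfl⟩

omit hV hfin in
lemma le_all {n} (A : Form L (n+1)) (ρ : Fin n → I.Dom) {b : ℝ}
    (h : ∀ d, b ≤ Form.val I A (Fin.snoc ρ d)) : b ≤ Form.val I (.all A) ρ := by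
  have hne : Set.Nonempty {v : ℝ | ∃ d, v = Form.val I A (Fin.snoc ρ d)} := by
    obtain ⟨d⟩ := I.dom_nonempty; exact ⟨_, d, rfl⟩
  exact le_csInf hne (by rintro v ⟨d, rfl⟩; exact h d)

omit hV hfin in
lemma ex_le {n} (A : Form L (n+1)) (ρ : Fin n → I.Dom) {b : ℝ}
    (h : ∀ d, Form.val I A (Fin.snoc ρ d) ≤ b) : Form.val I (.ex A) ρ ≤ b := by
  have hne : Set.Nonempty {v : ℝ | ∃ d, v = Form.val I A (Fin.snoc ρ d)} := by
    obtain ⟨d⟩ := I.dom_nonempty; exact ⟨_, d, rfl⟩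
  exact csSup_le hne (by rintro v ⟨d, rfl⟩; exact h d)

end Quant
end Dev
section Dev2
variable {L : Lang} {V : Set ℝ}

lemma val_delta (I : Interp L V) {n} (A : Form L n) (ρ : Fin n → I.Dom) :
    Form.val I (.delta A) ρ = if Form.val I A ρ = 1 then 1 else 0 := rfl

lemma val_conj (I : Interp L V) {n} (A B : Form L n) (ρ : Fin n → I.Dom) :
    Form.val I (.conj A B) ρ = min (Form.val I A ρ) (Form.val I B ρ) := rfl

lemma val_disj (I : Interp L V) {n} (A B : Form L n) (ρ : Fin n → I.Dom) :
    Form.val I (.disj A B) ρ = max (Form.val I A ρ) (Form.val I B ρ) := rfl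

lemma Term.eval_rename (I : Interp L V) {α β : Type} (f : α → β) (t : Term L α)
    (v : β → I.Dom) : Term.eval I v (t.rename f) = Term.eval I (v ∘ f) t := by
  induction t with
  | var i => rfl
  | func g ts ih => simp only [Term.rename, Term.eval]; congr 1; funext j; exact ih j

lemma snoc_comp_lastCases {n m : ℕ} {D : Type} (ρ : Fin n → D) (d : D) (f : Fin m → Fin n) :
    (Fin.snoc ρ d : Fin (n+1) → D) ∘
      (Fin.lastCases (Fin.last n) (fun i => Fin.castSucc (f i)) : Fin (m+1) → Fin (n+1))
      = Fin.snoc (ρ ∘ f) d := by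
  funext i
  refine Fin.lastCases ?_ (fun i => ?_) i
  · simp
  · simp

lemma val_rename (I : Interp L V) :
    ∀ {m n : ℕ} (A : Form L m) (f : Fin m → Fin n) (ρ : Fin n → I.Dom),
      Form.val I (A.rename f) ρ = Form.val I A (ρ ∘ f) := by
  intro m n A
  induction A generalizing n with
  | falsum => intro f ρ; rfl
  | atom R ts =>
      intro f ρ; simp only [Form.rename, Form.val]
      congr 1; funext j; exact Term.eval_rename I f (ts j) ρ
  | conj A B ihA ihB => intro f ρ; simp only [Form.rename, Form.val, ihA, ihB]
  | disj A B ihA ihB => intro f ρ; simp only [Form.rename, Form.val, ihA, ihB]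
  | impl A B ihA ihB => intro f ρ; simp only [Form.rename, Form.val, ihA, ihB]
  | delta A ih => intro f ρ; simp only [Form.rename, Form.val, ih]
  | all A ih =>
      intro f ρ
      simp only [Form.rename, Form.val]
      congr 1; ext v
      exact exists_congr fun d => by rw [ih, snoc_comp_lastCases]
  | ex A ih =>
      intro f ρ
      simp only [Form.rename, Form.val]
      congr 1; ext v
      exact exists_congr fun d => by rw [ih, snoc_comp_lastCases]

lemma val_lift (I : Interp L V) {n} (B : Form L n) (ρ : Fin n → I.Dom) (d : I.Dom) :
    Form.val I B.lift (Fin.snoc ρ d) = Form.val I B ρ := by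
  rw [Form.lift, val_rename]
  congr 1; funext i; simp [Function.comp]

/-- Monotonicity of Gödel implication in the second argument. -/
lemma gimp_mono {b c₁ c₂ : ℝ} (hc : c₁ ≤ c₂) (h1 : c₁ ≤ 1) : gimp b c₁ ≤ gimp b c₂ := by
  unfold gimp
  split
  · rw [if_pos (le_trans ‹b ≤ c₁› hc)]
  · split
    · exact h1
    · exact hc

/-- Antitonicity of Gödel implication in the first argument. -/
lemma gimp_anti {a₁ a₂ b : ℝ} (ha : a₁ ≤ a₂) (h1 : b ≤ 1) : gimp a₂ b ≤ gimp a₁ b := by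
  unfold gimp
  split
  · rw [if_pos (le_trans ha ‹a₂ ≤ b›)]
  · split
    · exact h1
    · exact le_refl b

section Shifts
variable (hV : GodelSet V) (hfin : V.Finite) (I : Interp L V)
include hV hfin

set_option linter.unusedSectionVars false

lemma sh_delta_all {n} (A : Form L (n+1)) (ρ : Fin n → I.Dom) :
    Form.val I (.delta (.all A)) ρ = Form.val I (.all (.delta A)) ρ := by
  by_cases h : ∀ d, Form.val I A (Fin.snoc ρ d) = 1
  · have h1 : Form.val I (.all A) ρ = 1 := by
      apply le_antisymm
      · obtain ⟨d, hd⟩ := exists_all_eq hV hfin I A ρ; rw [hd, h d]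
      · exact le_all I A ρ (fun d => (h d).ge)
    have h2 : Form.val I (.all (.delta A)) ρ = 1 := by
      apply le_antisymm
      · obtain ⟨d, hd⟩ := exists_all_eq hV hfin I (.delta A) ρ
        rw [hd, val_delta]; split <;> norm_num
      · refine le_all I (.delta A) ρ (fun d => ?_)
        rw [val_delta, if_pos (h d)]
    rw [val_delta, if_pos h1, h2]
  · push_neg at h
    obtain ⟨d₀, hd₀⟩ := h
    have h1 : Form.val I (.all A) ρ ≠ 1 := by
      intro hc
      exact hd₀ (le_antisymm (val_le_one hV hfin I A _)
        (hc ▸ all_le hV hfin I A ρ d₀))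
    have h2 : Form.val I (.all (.delta A)) ρ = 0 := by
      apply le_antisymm
      · calc Form.val I (.all (.delta A)) ρ
            ≤ Form.val I (.delta A) (Fin.snoc ρ d₀) := all_le hV hfin I _ ρ d₀
          _ = 0 := by rw [val_delta, if_neg hd₀]
      · refine le_all I (.delta A) ρ (fun d => ?_)
        rw [val_delta]; split <;> norm_num
    rw [val_delta, if_neg h1, h2]

lemma sh_delta_ex {n} (A : Form L (n+1)) (ρ : Fin n → I.Dom) :
    Form.val I (.delta (.ex A)) ρ = Form.val I (.ex (.delta A)) ρ := by
  by_cases h : ∃ d, Form.val I A (Fin.snoc ρ d) = 1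
  · obtain ⟨d₀, hd₀⟩ := h
    have h1 : Form.val I (.ex A) ρ = 1 :=
      le_antisymm (ex_le I A ρ (fun d => val_le_one hV hfin I A _))
        (hd₀ ▸ le_ex hV hfin I A ρ d₀)
    have h2 : Form.val I (.ex (.delta A)) ρ = 1 := by
      apply le_antisymm
      · refine ex_le I (.delta A) ρ (fun d => ?_)
        rw [val_delta]; split <;> norm_num
      · calc (1:ℝ) = Form.val I (.delta A) (Fin.snoc ρ d₀) := by
              rw [val_delta, if_pos hd₀]
          _ ≤ _ := le_ex hV hfin I (.delta A) ρ d₀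
    rw [val_delta, if_pos h1, h2]
  · push_neg at h
    have h1 : Form.val I (.ex A) ρ ≠ 1 := by
      obtain ⟨d, hd⟩ := exists_ex_eq hV hfin I A ρ
      rw [hd]; exact h d
    have h2 : Form.val I (.ex (.delta A)) ρ = 0 := by
      apply le_antisymm
      · refine ex_le I (.delta A) ρ (fun d => ?_)
        rw [val_delta, if_neg (h d)]
      · obtain ⟨d⟩ := I.dom_nonempty
        calc (0:ℝ) ≤ Form.val I (.delta A) (Fin.snoc ρ d) := by
              rw [val_delta]; split <;> norm_num
          _ ≤ _ := le_ex hV hfin I (.delta A) ρ d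
    rw [val_delta, if_neg h1, h2]

lemma sh_all_conj {n} (A : Form L (n+1)) (B : Form L n) (ρ : Fin n → I.Dom) :
    Form.val I (.all (.conj A B.lift)) ρ = Form.val I (.conj (.all A) B) ρ := by
  apply le_antisymm
  · obtain ⟨d₀, hd₀⟩ := exists_all_eq hV hfin I A ρ
    calc Form.val I (.all (.conj A B.lift)) ρ
        ≤ Form.val I (.conj A B.lift) (Fin.snoc ρ d₀) := all_le hV hfin I _ ρ d₀
      _ = min (Form.val I A (Fin.snoc ρ d₀)) (Form.val I B ρ) := by
          simp only [Form.val, val_lift]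
      _ = Form.val I (.conj (.all A) B) ρ := by rw [val_conj, hd₀]
  · refine le_all I _ ρ (fun d => ?_)
    show min (Form.val I (.all A) ρ) (Form.val I B ρ) ≤
      min (Form.val I A (Fin.snoc ρ d)) (Form.val I B.lift (Fin.snoc ρ d))
    rw [val_lift]
    exact min_le_min (all_le hV hfin I A ρ d) le_rfl

lemma sh_ex_conj {n} (A : Form L (n+1)) (B : Form L n) (ρ : Fin n → I.Dom) :
    Form.val I (.ex (.conj A B.lift)) ρ = Form.val I (.conj (.ex A) B) ρ := by
  apply le_antisymm
  · refine ex_le I _ ρ (fun d => ?_)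
    show min (Form.val I A (Fin.snoc ρ d)) (Form.val I B.lift (Fin.snoc ρ d)) ≤
      min (Form.val I (.ex A) ρ) (Form.val I B ρ)
    rw [val_lift]
    exact min_le_min (le_ex hV hfin I A ρ d) le_rfl
  · obtain ⟨d₀, hd₀⟩ := exists_ex_eq hV hfin I A ρ
    calc Form.val I (.conj (.ex A) B) ρ
        = min (Form.val I A (Fin.snoc ρ d₀)) (Form.val I B ρ) := by
          rw [val_conj, hd₀]
      _ = Form.val I (.conj A B.lift) (Fin.snoc ρ d₀) := by
          simp only [Form.val, val_lift]
      _ ≤ _ := le_ex hV hfin I _ ρ d₀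

lemma sh_all_disj {n} (A : Form L (n+1)) (B : Form L n) (ρ : Fin n → I.Dom) :
    Form.val I (.all (.disj A B.lift)) ρ = Form.val I (.disj (.all A) B) ρ := by
  apply le_antisymm
  · obtain ⟨d₀, hd₀⟩ := exists_all_eq hV hfin I A ρ
    calc Form.val I (.all (.disj A B.lift)) ρ
        ≤ Form.val I (.disj A B.lift) (Fin.snoc ρ d₀) := all_le hV hfin I _ ρ d₀
      _ = max (Form.val I A (Fin.snoc ρ d₀)) (Form.val I B ρ) := by
          simp only [Form.val, val_lift]
      _ = Form.val I (.disj (.all A) B) ρ := by rw [val_disj, hd₀]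
  · refine le_all I _ ρ (fun d => ?_)
    show max (Form.val I (.all A) ρ) (Form.val I B ρ) ≤
      max (Form.val I A (Fin.snoc ρ d)) (Form.val I B.lift (Fin.snoc ρ d))
    rw [val_lift]
    exact max_le_max (all_le hV hfin I A ρ d) le_rfl

lemma sh_ex_disj {n} (A : Form L (n+1)) (B : Form L n) (ρ : Fin n → I.Dom) :
    Form.val I (.ex (.disj A B.lift)) ρ = Form.val I (.disj (.ex A) B) ρ := by
  apply le_antisymm
  · refine ex_le I _ ρ (fun d => ?_)
    show max (Form.val I A (Fin.snoc ρ d)) (Form.val I B.lift (Fin.snoc ρ d)) ≤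
      max (Form.val I (.ex A) ρ) (Form.val I B ρ)
    rw [val_lift]
    exact max_le_max (le_ex hV hfin I A ρ d) le_rfl
  · obtain ⟨d₀, hd₀⟩ := exists_ex_eq hV hfin I A ρ
    calc Form.val I (.disj (.ex A) B) ρ
        = max (Form.val I A (Fin.snoc ρ d₀)) (Form.val I B ρ) := by
          rw [val_disj, hd₀]
      _ = Form.val I (.disj A B.lift) (Fin.snoc ρ d₀) := by
          simp only [Form.val, val_lift]
      _ ≤ _ := le_ex hV hfin I _ ρ d₀

lemma sh_all_impl {n} (A : Form L (n+1)) (B : Form L n) (ρ : Fin n → I.Dom) :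
    Form.val I (.all (.impl A B.lift)) ρ = Form.val I (.impl (.ex A) B) ρ := by
  apply le_antisymm
  · obtain ⟨d₀, hd₀⟩ := exists_ex_eq hV hfin I A ρ
    calc Form.val I (.all (.impl A B.lift)) ρ
        ≤ Form.val I (.impl A B.lift) (Fin.snoc ρ d₀) := all_le hV hfin I _ ρ d₀
      _ = gimp (Form.val I A (Fin.snoc ρ d₀)) (Form.val I B ρ) := by
          rw [val_impl, val_lift]
      _ = Form.val I (.impl (.ex A) B) ρ := by rw [val_impl, hd₀]
  · refine le_all I _ ρ (fun d => ?_)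
    rw [val_impl, val_impl, val_lift]
    exact gimp_anti (le_ex hV hfin I A ρ d) (val_le_one hV hfin I B ρ)

lemma sh_ex_impl {n} (A : Form L (n+1)) (B : Form L n) (ρ : Fin n → I.Dom) :
    Form.val I (.ex (.impl A B.lift)) ρ = Form.val I (.impl (.all A) B) ρ := by
  apply le_antisymm
  · refine ex_le I _ ρ (fun d => ?_)
    rw [val_impl, val_impl, val_lift]
    exact gimp_anti (all_le hV hfin I A ρ d) (val_le_one hV hfin I B ρ)
  · obtain ⟨d₀, hd₀⟩ := exists_all_eq hV hfin I A ρ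
    calc Form.val I (.impl (.all A) B) ρ
        = gimp (Form.val I A (Fin.snoc ρ d₀)) (Form.val I B ρ) := by
          rw [val_impl, hd₀]
      _ = Form.val I (.impl A B.lift) (Fin.snoc ρ d₀) := by rw [val_impl, val_lift]
      _ ≤ _ := le_ex hV hfin I _ ρ d₀

lemma sh_all_impl' {n} (A : Form L (n+1)) (B : Form L n) (ρ : Fin n → I.Dom) :
    Form.val I (.all (.impl B.lift A)) ρ = Form.val I (.impl B (.all A)) ρ := by
  apply le_antisymm
  · obtain ⟨d₀, hd₀⟩ := exists_all_eq hV hfin I A ρ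
    calc Form.val I (.all (.impl B.lift A)) ρ
        ≤ Form.val I (.impl B.lift A) (Fin.snoc ρ d₀) := all_le hV hfin I _ ρ d₀
      _ = gimp (Form.val I B ρ) (Form.val I A (Fin.snoc ρ d₀)) := by
          rw [val_impl, val_lift]
      _ = Form.val I (.impl B (.all A)) ρ := by rw [val_impl, hd₀]
  · refine le_all I _ ρ (fun d => ?_)
    rw [val_impl, val_impl, val_lift]
    exact gimp_mono (all_le hV hfin I A ρ d) (val_le_one hV hfin I (.all A) ρ)

lemma sh_ex_impl' {n} (A : Form L (n+1)) (B : Form L n) (ρ : Fin n → I.Dom) :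
    Form.val I (.ex (.impl B.lift A)) ρ = Form.val I (.impl B (.ex A)) ρ := by
  apply le_antisymm
  · refine ex_le I _ ρ (fun d => ?_)
    rw [val_impl, val_impl, val_lift]
    exact gimp_mono (le_ex hV hfin I A ρ d) (val_le_one hV hfin I A _)
  · obtain ⟨d₀, hd₀⟩ := exists_ex_eq hV hfin I A ρ
    calc Form.val I (.impl B (.ex A)) ρ
        = gimp (Form.val I B ρ) (Form.val I A (Fin.snoc ρ d₀)) := by
          rw [val_impl, hd₀]
      _ = Form.val I (.impl B.lift A) (Fin.snoc ρ d₀) := by rw [val_impl, val_lift]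
      _ ≤ _ := le_ex hV hfin I _ ρ d₀

end Shifts
end Dev2
section Dev3
variable {L : Lang} {V : Set ℝ}

/-- Logical equivalence of formulas over `V`-interpretations. -/
def Eqv (V : Set ℝ) {L : Lang} {n : ℕ} (A B : Form L n) : Prop :=
  ∀ (I : Interp L V) (ρ : Fin n → I.Dom), Form.val I A ρ = Form.val I B ρ

lemma Eqv.trans' {n} {A B C : Form L n} (h1 : Eqv V A B) (h2 : Eqv V B C) :
    Eqv V A C := fun I ρ => (h1 I ρ).trans (h2 I ρ)

lemma eqv_all {n} {A B : Form L (n+1)} (h : Eqv V A B) : Eqv V (.all A) (.all B) := by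
  intro I ρ
  simp only [Form.val]
  congr 1; ext v
  exact exists_congr fun d => by rw [h I]

lemma eqv_ex {n} {A B : Form L (n+1)} (h : Eqv V A B) : Eqv V (.ex A) (.ex B) := by
  intro I ρ
  simp only [Form.val]
  congr 1; ext v
  exact exists_congr fun d => by rw [h I]

lemma eqv_conj_comm {n} (A B : Form L n) : Eqv V (.conj A B) (.conj B A) := by
  intro I ρ; rw [val_conj, val_conj, min_comm]

lemma eqv_disj_comm {n} (A B : Form L n) : Eqv V (.disj A B) (.disj B A) := by
  intro I ρ; rw [val_disj, val_disj, max_comm]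

lemma quantFree_rename : ∀ {m n : ℕ} (f : Fin m → Fin n) (A : Form L m),
    QuantFree A → QuantFree (A.rename f) := by
  intro m n f A
  induction A generalizing n with
  | falsum => intro _; trivial
  | atom R ts => intro _; trivial
  | conj A B ihA ihB => rintro ⟨hA, hB⟩; exact ⟨ihA f hA, ihB f hB⟩
  | disj A B ihA ihB => rintro ⟨hA, hB⟩; exact ⟨ihA f hA, ihB f hB⟩
  | impl A B ihA ihB => rintro ⟨hA, hB⟩; exact ⟨ihA f hA, ihB f hB⟩
  | delta A ih => intro h; exact ih f h
  | all A ih => intro h; exact h.elim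
  | ex A ih => intro h; exact h.elim

lemma isPrenex_rename {m : ℕ} {A : Form L m} (h : IsPrenex A) :
    ∀ {n : ℕ} (f : Fin m → Fin n), IsPrenex (A.rename f) := by
  induction h with
  | qf hq => intro n f; exact .qf (quantFree_rename f _ hq)
  | all hP ih => intro n f; simp only [Form.rename]; exact .all (ih _)
  | ex hP ih => intro n f; simp only [Form.rename]; exact .ex (ih _)

section Comb
variable (hV : GodelSet V) (hfin : V.Finite)
include hV hfin

lemma prenex_conj_qf {n : ℕ} {Q : Form L n} (hQ : IsPrenex Q) :
    ∀ {P : Form L n}, QuantFree P → ∃ R, IsPrenex R ∧ Eqv V (.conj P Q) R := by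
  induction hQ with
  | @qf m Q hq => intro P hP; exact ⟨.conj P Q, .qf ⟨hP, hq⟩, fun I ρ => rfl⟩
  | @all m Q' hQ' ih =>
      intro P hP
      obtain ⟨R, hR, hE⟩ := ih (quantFree_rename Fin.castSucc P hP)
      refine ⟨.all R, .all hR, ?_⟩
      refine Eqv.trans' (eqv_conj_comm P (.all Q')) ?_
      refine Eqv.trans' (fun I ρ => (sh_all_conj hV hfin I Q' P ρ).symm) ?_
      exact eqv_all (Eqv.trans' (eqv_conj_comm Q' P.lift) hE)
  | @ex m Q' hQ' ih =>
      intro P hP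
      obtain ⟨R, hR, hE⟩ := ih (quantFree_rename Fin.castSucc P hP)
      refine ⟨.ex R, .ex hR, ?_⟩
      refine Eqv.trans' (eqv_conj_comm P (.ex Q')) ?_
      refine Eqv.trans' (fun I ρ => (sh_ex_conj hV hfin I Q' P ρ).symm) ?_
      exact eqv_ex (Eqv.trans' (eqv_conj_comm Q' P.lift) hE)

lemma prenex_conj {n : ℕ} {P : Form L n} (hP : IsPrenex P) :
    ∀ {Q : Form L n}, IsPrenex Q → ∃ R, IsPrenex R ∧ Eqv V (.conj P Q) R := by
  induction hP with
  | qf hq => intro Q hQ; exact prenex_conj_qf hV hfin hQ hq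
  | @all m P' hP' ih =>
      intro Q hQ
      obtain ⟨R, hR, hE⟩ := ih (isPrenex_rename hQ Fin.castSucc)
      refine ⟨.all R, .all hR, ?_⟩
      refine Eqv.trans' (fun I ρ => (sh_all_conj hV hfin I P' Q ρ).symm) (eqv_all hE)
  | @ex m P' hP' ih =>
      intro Q hQ
      obtain ⟨R, hR, hE⟩ := ih (isPrenex_rename hQ Fin.castSucc)
      refine ⟨.ex R, .ex hR, ?_⟩
      refine Eqv.trans' (fun I ρ => (sh_ex_conj hV hfin I P' Q ρ).symm) (eqv_ex hE)

lemma prenex_disj_qf {n : ℕ} {Q : Form L n} (hQ : IsPrenex Q) :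
    ∀ {P : Form L n}, QuantFree P → ∃ R, IsPrenex R ∧ Eqv V (.disj P Q) R := by
  induction hQ with
  | @qf m Q hq => intro P hP; exact ⟨.disj P Q, .qf ⟨hP, hq⟩, fun I ρ => rfl⟩
  | @all m Q' hQ' ih =>
      intro P hP
      obtain ⟨R, hR, hE⟩ := ih (quantFree_rename Fin.castSucc P hP)
      refine ⟨.all R, .all hR, ?_⟩
      refine Eqv.trans' (eqv_disj_comm P (.all Q')) ?_
      refine Eqv.trans' (fun I ρ => (sh_all_disj hV hfin I Q' P ρ).symm) ?_
      exact eqv_all (Eqv.trans' (eqv_disj_comm Q' P.lift) hE)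
  | @ex m Q' hQ' ih =>
      intro P hP
      obtain ⟨R, hR, hE⟩ := ih (quantFree_rename Fin.castSucc P hP)
      refine ⟨.ex R, .ex hR, ?_⟩
      refine Eqv.trans' (eqv_disj_comm P (.ex Q')) ?_
      refine Eqv.trans' (fun I ρ => (sh_ex_disj hV hfin I Q' P ρ).symm) ?_
      exact eqv_ex (Eqv.trans' (eqv_disj_comm Q' P.lift) hE)

lemma prenex_disj {n : ℕ} {P : Form L n} (hP : IsPrenex P) :
    ∀ {Q : Form L n}, IsPrenex Q → ∃ R, IsPrenex R ∧ Eqv V (.disj P Q) R := by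
  induction hP with
  | qf hq => intro Q hQ; exact prenex_disj_qf hV hfin hQ hq
  | @all m P' hP' ih =>
      intro Q hQ
      obtain ⟨R, hR, hE⟩ := ih (isPrenex_rename hQ Fin.castSucc)
      exact ⟨.all R, .all hR,
        Eqv.trans' (fun I ρ => (sh_all_disj hV hfin I P' Q ρ).symm) (eqv_all hE)⟩
  | @ex m P' hP' ih =>
      intro Q hQ
      obtain ⟨R, hR, hE⟩ := ih (isPrenex_rename hQ Fin.castSucc)
      exact ⟨.ex R, .ex hR,
        Eqv.trans' (fun I ρ => (sh_ex_disj hV hfin I P' Q ρ).symm) (eqv_ex hE)⟩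

lemma prenex_impl_qf {n : ℕ} {Q : Form L n} (hQ : IsPrenex Q) :
    ∀ {P : Form L n}, QuantFree P → ∃ R, IsPrenex R ∧ Eqv V (.impl P Q) R := by
  induction hQ with
  | @qf m Q hq => intro P hP; exact ⟨.impl P Q, .qf ⟨hP, hq⟩, fun I ρ => rfl⟩
  | @all m Q' hQ' ih =>
      intro P hP
      obtain ⟨R, hR, hE⟩ := ih (quantFree_rename Fin.castSucc P hP)
      exact ⟨.all R, .all hR,
        Eqv.trans' (fun I ρ => (sh_all_impl' hV hfin I Q' P ρ).symm) (eqv_all hE)⟩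
  | @ex m Q' hQ' ih =>
      intro P hP
      obtain ⟨R, hR, hE⟩ := ih (quantFree_rename Fin.castSucc P hP)
      exact ⟨.ex R, .ex hR,
        Eqv.trans' (fun I ρ => (sh_ex_impl' hV hfin I Q' P ρ).symm) (eqv_ex hE)⟩

lemma prenex_impl {n : ℕ} {P : Form L n} (hP : IsPrenex P) :
    ∀ {Q : Form L n}, IsPrenex Q → ∃ R, IsPrenex R ∧ Eqv V (.impl P Q) R := by
  induction hP with
  | qf hq => intro Q hQ; exact prenex_impl_qf hV hfin hQ hq
  | @all m P' hP' ih =>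
      intro Q hQ
      obtain ⟨R, hR, hE⟩ := ih (isPrenex_rename hQ Fin.castSucc)
      exact ⟨.ex R, .ex hR,
        Eqv.trans' (fun I ρ => (sh_ex_impl hV hfin I P' Q ρ).symm) (eqv_ex hE)⟩
  | @ex m P' hP' ih =>
      intro Q hQ
      obtain ⟨R, hR, hE⟩ := ih (isPrenex_rename hQ Fin.castSucc)
      exact ⟨.all R, .all hR,
        Eqv.trans' (fun I ρ => (sh_all_impl hV hfin I P' Q ρ).symm) (eqv_all hE)⟩

lemma prenex_delta {n : ℕ} {P : Form L n} (hP : IsPrenex P) :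
    ∃ R, IsPrenex R ∧ Eqv V (.delta P) R := by
  induction hP with
  | @qf m Q hq => exact ⟨.delta Q, .qf hq, fun I ρ => rfl⟩
  | @all m P' hP' ih =>
      obtain ⟨R, hR, hE⟩ := ih
      exact ⟨.all R, .all hR,
        Eqv.trans' (fun I ρ => sh_delta_all hV hfin I P' ρ) (eqv_all hE)⟩
  | @ex m P' hP' ih =>
      obtain ⟨R, hR, hE⟩ := ih
      exact ⟨.ex R, .ex hR,
        Eqv.trans' (fun I ρ => sh_delta_ex hV hfin I P' ρ) (eqv_ex hE)⟩

lemma prenex_main {n : ℕ} (C : Form L n) : ∃ P, IsPrenex P ∧ Eqv V C P := by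
  induction C with
  | falsum => exact ⟨.falsum, .qf trivial, fun I ρ => rfl⟩
  | atom R ts => exact ⟨.atom R ts, .qf trivial, fun I ρ => rfl⟩
  | conj A B ihA ihB =>
      obtain ⟨P, hP, hEP⟩ := ihA
      obtain ⟨Q, hQ, hEQ⟩ := ihB
      obtain ⟨R, hR, hE⟩ := prenex_conj hV hfin hP hQ
      refine ⟨R, hR, fun I ρ => ?_⟩
      rw [val_conj, hEP I ρ, hEQ I ρ, ← val_conj, hE I ρ]
  | disj A B ihA ihB =>
      obtain ⟨P, hP, hEP⟩ := ihA
      obtain ⟨Q, hQ, hEQ⟩ := ihB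
      obtain ⟨R, hR, hE⟩ := prenex_disj hV hfin hP hQ
      refine ⟨R, hR, fun I ρ => ?_⟩
      rw [val_disj, hEP I ρ, hEQ I ρ, ← val_disj, hE I ρ]
  | impl A B ihA ihB =>
      obtain ⟨P, hP, hEP⟩ := ihA
      obtain ⟨Q, hQ, hEQ⟩ := ihB
      obtain ⟨R, hR, hE⟩ := prenex_impl hV hfin hP hQ
      refine ⟨R, hR, fun I ρ => ?_⟩
      rw [val_impl, hEP I ρ, hEQ I ρ, ← val_impl, hE I ρ]
  | delta A ih =>
      obtain ⟨P, hP, hEP⟩ := ih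
      obtain ⟨R, hR, hE⟩ := prenex_delta hV hfin hP
      refine ⟨R, hR, fun I ρ => ?_⟩
      rw [val_delta, hEP I ρ, ← val_delta, hE I ρ]
  | all A ih =>
      obtain ⟨P, hP, hEP⟩ := ih
      exact ⟨.all P, .all hP, eqv_all hEP⟩
  | ex A ih =>
      obtain ⟨P, hP, hEP⟩ := ih
      exact ⟨.ex P, .ex hP, eqv_ex hEP⟩

end Comb

lemma gimp_self (a : ℝ) : gimp a a = 1 := if_pos le_rfl

lemma valid_iff_of {C D : Form L 0}
    (h : ∀ (I : Interp L V) (ρ : Fin 0 → I.Dom), Form.val I C ρ = Form.val I D ρ) :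
    Valid V (Form.iff C D) := by
  intro I
  show Form.val I (.conj (.impl C D) (.impl D C)) Fin.elim0 = 1
  rw [val_conj, val_impl, val_impl, h I Fin.elim0, gimp_self, min_self]

end Dev3

/-- For a finite Gödel set `V`: the equivalences
`Δ∀x A(x) ↔ ∀x ΔA(x)` and `Δ∃x A(x) ↔ ∃x ΔA(x)` are valid in `G_V^Δ`, all
classical quantifier-shift schemas are valid in `G_V^Δ`, and consequently
every sentence of the Δ-extended language has a logically equivalent prenex
sentence in `G_V^Δ`. -/
theorem stmt_14 {L : Lang} {V : Set ℝ} (hV : GodelSet V) (hfin : V.Finite) :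
    (∀ A : Form L 1,
      Valid V (Form.iff (Form.delta (Form.all A)) (Form.all (Form.delta A))) ∧
      Valid V (Form.iff (Form.delta (Form.ex A)) (Form.ex (Form.delta A)))) ∧
    (∀ (A : Form L 1) (B : Form L 0),
      Valid V (Form.iff (Form.all (Form.conj A (Form.lift B)))
        (Form.conj (Form.all A) B)) ∧
      Valid V (Form.iff (Form.ex (Form.conj A (Form.lift B)))
        (Form.conj (Form.ex A) B)) ∧
      Valid V (Form.iff (Form.all (Form.disj A (Form.lift B)))
        (Form.disj (Form.all A) B)) ∧
      Valid V (Form.iff (Form.ex (Form.disj A (Form.lift B)))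
        (Form.disj (Form.ex A) B)) ∧
      Valid V (Form.iff (Form.all (Form.impl A (Form.lift B)))
        (Form.impl (Form.ex A) B)) ∧
      Valid V (Form.iff (Form.ex (Form.impl A (Form.lift B)))
        (Form.impl (Form.all A) B)) ∧
      Valid V (Form.iff (Form.all (Form.impl (Form.lift B) A))
        (Form.impl B (Form.all A))) ∧
      Valid V (Form.iff (Form.ex (Form.impl (Form.lift B) A))
        (Form.impl B (Form.ex A)))) ∧
    (∀ C : Form L 0, ∃ P : Form L 0, IsPrenex P ∧
      ∀ I : Interp L V, Form.sval I C = Form.sval I P) := by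
  refine ⟨fun A => ⟨valid_iff_of (fun I ρ => sh_delta_all hV hfin I A ρ),
      valid_iff_of (fun I ρ => sh_delta_ex hV hfin I A ρ)⟩,
    fun A B => ⟨valid_iff_of (fun I ρ => sh_all_conj hV hfin I A B ρ),
      valid_iff_of (fun I ρ => sh_ex_conj hV hfin I A B ρ),
      valid_iff_of (fun I ρ => sh_all_disj hV hfin I A B ρ),
      valid_iff_of (fun I ρ => sh_ex_disj hV hfin I A B ρ),
      valid_iff_of (fun I ρ => sh_all_impl hV hfin I A B ρ),
      valid_iff_of (fun I ρ => sh_ex_impl hV hfin I A B ρ),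
      valid_iff_of (fun I ρ => sh_all_impl' hV hfin I A B ρ),
      valid_iff_of (fun I ρ => sh_ex_impl' hV hfin I A B ρ)⟩,
    fun C => ?_⟩
  obtain ⟨P, hP, hE⟩ := prenex_main hV hfin C
  exact ⟨P, hP, fun I => hE I Fin.elim0⟩

end GodelPaper
end

section
/- The sentence Δ∃x A(x) ⊃ ∃x ΔA(x) (for a unary predicate A) is valid in G_{V_m}^Δ for every m ≥ 2 but is not valid in G_{V_↑}^Δ; consequently G_{V_↑}^Δ is not the intersection of the finite-valued Gödel logics with Δ: there is a sentence valid in every G_{V_m}^Δ that is not valid in G_{V_↑}^Δ. -/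
namespace GodelPaper

/-- Elements of `Vfin m` are at most 1. -/
lemma vfin_le_one {m : ℕ} {x : ℝ} (hx : x ∈ Vfin m) : x ≤ 1 := by
  rcases hx with ⟨k, hk1, _, rfl⟩ | rfl
  · have hk : (0:ℝ) < k := by exact_mod_cast hk1
    have : (0:ℝ) ≤ 1 / k := by positivity
    linarith
  · exact le_refl 1

/-- Gap lemma for `Vfin m`. -/
lemma vfin_gap {m : ℕ} {x : ℝ} (hx : x ∈ Vfin m) :
    x = 1 ∨ x ≤ 1 - 1 / ((m - 1 : ℕ) : ℝ) := by
  rcases hx with ⟨k, hk1, hk2, rfl⟩ | rfl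
  · right
    have hk : (0:ℝ) < k := by exact_mod_cast hk1
    have hkm : (k : ℝ) ≤ ((m - 1 : ℕ) : ℝ) := by exact_mod_cast hk2
    have := one_div_le_one_div_of_le hk hkm
    linarith
  · left; rfl

/-- The sentence `Δ∃x P(x) ⊃ ∃x ΔP(x)` is valid in `G_{V_m}^Δ` for `m ≥ 2`. -/
lemma fin_valid {L : Lang} (P : L.Rel 1) (m : ℕ) (hm : 2 ≤ m) :
    Valid (Vfin m)
      (Form.impl (Form.delta (Form.ex (atom1 P (Term.var 0))))
        (Form.ex (Form.delta (atom1 P (Term.var 0))))) := by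
  intro I
  have harg : ∀ d : I.Dom,
      (fun _ : Fin 1 => Term.eval I (Fin.snoc (α := fun _ => I.Dom) Fin.elim0 d) (Term.var 0))
        = fun _ => d := by
    intro d; funext j; simp [Term.eval, Fin.snoc]
  unfold Form.sval
  simp only [Form.val, atom1, harg]
  set S : Set ℝ := {v : ℝ | ∃ d : I.Dom, v = I.relVal P fun _ => d} with hSdef
  set T : Set ℝ := {v : ℝ | ∃ d : I.Dom, v = if (I.relVal P fun _ => d) = 1 then (1:ℝ) else 0}
    with hTdef
  obtain ⟨d0⟩ := I.dom_nonempty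
  have hSne : S.Nonempty := ⟨_, d0, rfl⟩
  have hSbdd : BddAbove S := by
    refine ⟨1, ?_⟩
    rintro v ⟨d, rfl⟩
    exact vfin_le_one (I.relVal_mem P _)
  have hTbdd : BddAbove T := by
    refine ⟨1, ?_⟩
    rintro v ⟨d, rfl⟩
    split <;> norm_num
  have hT0 : (0:ℝ) ≤ sSup T := by
    refine le_csSup_of_le hTbdd ⟨d0, rfl⟩ ?_
    split <;> norm_num
  have hle : (if sSup S = 1 then (1:ℝ) else 0) ≤ sSup T := by
    split
    · rename_i hsup
      by_cases hw : ∃ d : I.Dom, (I.relVal P fun _ => d) = 1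
      · obtain ⟨d, hd⟩ := hw
        have h1 : (1:ℝ) ∈ T := ⟨d, by rw [if_pos hd]⟩
        exact le_csSup hTbdd h1
      · exfalso
        push_neg at hw
        have hc : ∀ v ∈ S, v ≤ 1 - 1 / ((m - 1 : ℕ) : ℝ) := by
          rintro v ⟨d, rfl⟩
          rcases vfin_gap (I.relVal_mem P (fun _ => d)) with h | h
          · exact absurd h (hw d)
          · exact h
        have hsle := csSup_le hSne hc
        have hm1 : (1:ℕ) ≤ m - 1 := by omega
        have hm1' : (0:ℝ) < ((m - 1 : ℕ) : ℝ) := by exact_mod_cast hm1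
        have : (0:ℝ) < 1 / ((m - 1 : ℕ) : ℝ) := by positivity
        rw [hsup] at hsle
        linarith
    · exact hT0
  rw [if_pos hle]

/-- Counterexample value function. -/
noncomputable def ctrRel : ∀ (k : ℕ), (Fin k → ℕ) → ℝ
  | 1, v => 1 - 1 / ((v 0 : ℝ) + 1)
  | _, _ => 1

lemma ctrRel_mem (k : ℕ) (v : Fin k → ℕ) : ctrRel k v ∈ Vup := by
  match k with
  | 1 =>
    left
    refine ⟨v 0 + 1, by omega, ?_⟩
    simp [ctrRel]
  | 0 => right; rfl
  | (n+2) => right; rfl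

/-- Counterexample interpretation over `Vup`. -/
noncomputable def ctrInterp (L : Lang) : Interp L Vup where
  Dom := ℕ
  dom_nonempty := ⟨0⟩
  funMap := fun {k} _ _ => 0
  relVal := fun {k} _ v => ctrRel k v
  relVal_mem := fun {k} _ v => ctrRel_mem k v

lemma not_vup_valid {L : Lang} (P : L.Rel 1) :
    ¬ Valid Vup
      (Form.impl (Form.delta (Form.ex (atom1 P (Term.var 0))))
        (Form.ex (Form.delta (atom1 P (Term.var 0))))) := by
  intro h
  have hv := h (ctrInterp L)
  set I := ctrInterp L with hI
  have harg : ∀ d : ℕ,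
      (I.relVal P fun _ : Fin 1 => Term.eval I (Fin.snoc (α := fun _ => ℕ) Fin.elim0 d) (Term.var 0))
        = 1 - 1 / ((d:ℝ)+1) := by
    intro d
    have h1 : (fun _ : Fin 1 => Term.eval I (Fin.snoc (α := fun _ => ℕ) Fin.elim0 d) (Term.var 0))
        = fun _ => d := by
      funext j; simp [Term.eval, Fin.snoc]; rfl
    rw [h1]
    show ctrRel 1 (fun _ => d) = _
    simp [ctrRel]
  have hlt1 : ∀ d : ℕ, 1 - 1 / ((d:ℝ)+1) < 1 := by
    intro d
    have : (0:ℝ) < 1 / ((d:ℝ)+1) := by positivity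
    linarith
  unfold Form.sval at hv
  simp only [Form.val, atom1, harg] at hv
  have hS : sSup {v : ℝ | ∃ d : ℕ, v = 1 - 1 / ((d:ℝ)+1)} = 1 := by
    have hbdd : BddAbove {v : ℝ | ∃ d : ℕ, v = 1 - 1 / ((d:ℝ)+1)} := by
      refine ⟨1, ?_⟩
      rintro v ⟨d, rfl⟩
      exact le_of_lt (hlt1 d)
    refine le_antisymm (csSup_le ⟨_, 0, rfl⟩ ?_) ?_
    · rintro v ⟨d, rfl⟩
      exact le_of_lt (hlt1 d)
    · by_contra hlt
      push_neg at hlt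
      set s := sSup {v : ℝ | ∃ d : ℕ, v = 1 - 1 / ((d:ℝ)+1)} with hs
      have hpos : 0 < 1 - s := by linarith
      obtain ⟨n, hn⟩ := exists_nat_one_div_lt hpos
      have hmem : 1 - 1 / ((n:ℝ)+1) ∈ {v : ℝ | ∃ d : ℕ, v = 1 - 1 / ((d:ℝ)+1)} := ⟨n, rfl⟩
      have := le_csSup hbdd hmem
      rw [← hs] at this
      linarith
  have hT : sSup {v : ℝ | ∃ d : ℕ, v = if 1 - 1 / ((d:ℝ)+1) = 1 then (1:ℝ) else 0} = 0 := by
    have heq : {v : ℝ | ∃ d : ℕ, v = if 1 - 1 / ((d:ℝ)+1) = 1 then (1:ℝ) else 0} = {0} := by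
      ext v
      constructor
      · rintro ⟨d, rfl⟩
        rw [if_neg (ne_of_lt (hlt1 d))]
        rfl
      · rintro rfl
        exact ⟨0, (if_neg (ne_of_lt (hlt1 0))).symm⟩
    rw [heq, csSup_singleton]
  have hv' : (if (if sSup {v : ℝ | ∃ d : ℕ, v = 1 - 1 / ((d:ℝ)+1)} = 1 then (1:ℝ) else 0) ≤
      sSup {v : ℝ | ∃ d : ℕ, v = if 1 - 1 / ((d:ℝ)+1) = 1 then (1:ℝ) else 0} then (1:ℝ)
      else sSup {v : ℝ | ∃ d : ℕ, v = if 1 - 1 / ((d:ℝ)+1) = 1 then (1:ℝ) else 0}) = 1 := hv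
  rw [hS, hT, if_pos rfl] at hv'
  norm_num at hv'


/-- The sentence `Δ∃x P(x) ⊃ ∃x ΔP(x)` is valid in `G_{V_m}^Δ`
for every `m ≥ 2` but not valid in `G_{V_↑}^Δ`; consequently `G_{V_↑}^Δ` is
not the intersection of the finite-valued Gödel logics with Δ: there is a
sentence valid in every `G_{V_m}^Δ` that is not valid in `G_{V_↑}^Δ`. -/
theorem stmt_15 {L : Lang} (P : L.Rel 1) :
    (∀ m : ℕ, 2 ≤ m → Valid (Vfin m)
      (Form.impl (Form.delta (Form.ex (atom1 P (Term.var 0))))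
        (Form.ex (Form.delta (atom1 P (Term.var 0)))))) ∧
    ¬ Valid Vup
      (Form.impl (Form.delta (Form.ex (atom1 P (Term.var 0))))
        (Form.ex (Form.delta (atom1 P (Term.var 0))))) ∧
    ∃ C : Form L 0, (∀ m : ℕ, 2 ≤ m → Valid (Vfin m) C) ∧ ¬ Valid Vup C := by
  exact ⟨fun m hm => fin_valid P m hm, not_vup_valid P,
    _, fun m hm => fin_valid P m hm, not_vup_valid P⟩

end GodelPaper
end

section
/- Let V be a Gödel set, c ∈ (0,1], and I a V-interpretation (of the Δ-extended language) such that every atomic sentence P with parameters satisfies I(P)=0 or I(P) ≥ c. Then every sentence A with parameters satisfies I(A)=0 or I(A) ≥ c. -/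
namespace GodelPaper

theorem val_bounds {L : Lang} {V : Set ℝ} (hV : GodelSet V) (I : Interp L V) :
    ∀ {n : ℕ} (A : Form L n) (ρ : Fin n → I.Dom),
      0 ≤ Form.val I A ρ ∧ Form.val I A ρ ≤ 1 := by
  intro n A
  induction A with
  | falsum => intro ρ; simp [Form.val]
  | atom R ts =>
      intro ρ
      have := hV.2.1 (I.relVal_mem R fun j => Term.eval I ρ (ts j))
      exact ⟨this.1, this.2⟩
  | conj A B ihA ihB =>
      intro ρ
      exact ⟨le_min (ihA ρ).1 (ihB ρ).1, min_le_of_left_le (ihA ρ).2⟩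
  | disj A B ihA ihB =>
      intro ρ
      exact ⟨le_max_of_le_left (ihA ρ).1, max_le (ihA ρ).2 (ihB ρ).2⟩
  | impl A B ihA ihB =>
      intro ρ
      simp only [Form.val]
      split
      · exact ⟨zero_le_one, le_refl 1⟩
      · exact ihB ρ
  | delta A ih =>
      intro ρ
      simp only [Form.val]
      split
      · exact ⟨zero_le_one, le_refl 1⟩
      · exact ⟨le_refl 0, zero_le_one⟩
  | all A ih =>
      intro ρ
      obtain ⟨d⟩ := I.dom_nonempty
      have hne : {v : ℝ | ∃ d : I.Dom, v = Form.val I A (Fin.snoc ρ d)}.Nonempty :=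
        ⟨_, d, rfl⟩
      have hbdd : BddBelow {v : ℝ | ∃ d : I.Dom, v = Form.val I A (Fin.snoc ρ d)} :=
        ⟨0, by rintro x ⟨e, rfl⟩; exact (ih _).1⟩
      constructor
      · exact le_csInf hne (by rintro x ⟨e, rfl⟩; exact (ih _).1)
      · exact le_trans (csInf_le hbdd ⟨d, rfl⟩) (ih _).2
  | ex A ih =>
      intro ρ
      obtain ⟨d⟩ := I.dom_nonempty
      have hne : {v : ℝ | ∃ d : I.Dom, v = Form.val I A (Fin.snoc ρ d)}.Nonempty :=
        ⟨_, d, rfl⟩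
      have hbdd : BddAbove {v : ℝ | ∃ d : I.Dom, v = Form.val I A (Fin.snoc ρ d)} :=
        ⟨1, by rintro x ⟨e, rfl⟩; exact (ih _).2⟩
      constructor
      · exact le_trans (ih _).1 (le_csSup hbdd ⟨d, rfl⟩)
      · exact csSup_le hne (by rintro x ⟨e, rfl⟩; exact (ih _).2)

/-- If `c ∈ (0,1]` and `I` is a `V`-interpretation (of the
Δ-extended language) in which every atomic sentence with parameters takes
value 0 or value ≥ c, then every formula (with parameters given by an
assignment of its free variables) takes value 0 or value ≥ c. -/
theorem stmt_18 {L : Lang} {V : Set ℝ} (hV : GodelSet V) (c : ℝ)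
    (hc : c ∈ Set.Ioc (0:ℝ) 1) (I : Interp L V)
    (hatoms : ∀ {k : ℕ} (R : L.Rel k) (v : Fin k → I.Dom),
      I.relVal R v = 0 ∨ c ≤ I.relVal R v) :
    ∀ {n : ℕ} (A : Form L n) (ρ : Fin n → I.Dom),
      Form.val I A ρ = 0 ∨ c ≤ Form.val I A ρ := by
  intro n A
  induction A with
  | falsum => intro ρ; left; rfl
  | atom R ts => intro ρ; exact hatoms R _
  | conj A B ihA ihB =>
      intro ρ
      rcases ihA ρ with h | h
      · left; simp [Form.val, h, min_eq_left, (val_bounds hV I B ρ).1]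
      · rcases ihB ρ with h' | h'
        · left; simp [Form.val, h', min_eq_right, (val_bounds hV I A ρ).1]
        · right; exact le_min h h'
  | disj A B ihA ihB =>
      intro ρ
      rcases ihA ρ with h | h
      · rcases ihB ρ with h' | h'
        · left; simp [Form.val, h, h']
        · right; exact le_max_of_le_right h'
      · right; exact le_max_of_le_left h
  | impl A B ihA ihB =>
      intro ρ
      simp only [Form.val]
      split
      · right; exact hc.2
      · exact ihB ρ
  | delta A ih =>
      intro ρ
      simp only [Form.val]
      split
      · right; exact hc.2
      · left; rfl
  | all A ih =>
      intro ρ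
      set S := {v : ℝ | ∃ d : I.Dom, v = Form.val I A (Fin.snoc ρ d)}
      obtain ⟨d⟩ := I.dom_nonempty
      have hne : S.Nonempty := ⟨_, d, rfl⟩
      have hbdd : BddBelow S :=
        ⟨0, by rintro x ⟨e, rfl⟩; exact (val_bounds hV I A _).1⟩
      by_cases h : ∃ e : I.Dom, Form.val I A (Fin.snoc ρ e) = 0
      · obtain ⟨e, he⟩ := h
        left
        refine le_antisymm ?_ (le_csInf hne ?_)
        · exact (by simpa [he] using csInf_le hbdd ⟨e, rfl⟩ : sInf S ≤ 0)
        · rintro x ⟨f, rfl⟩; exact (val_bounds hV I A _).1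
      · right
        push_neg at h
        refine le_csInf hne ?_
        rintro x ⟨f, rfl⟩
        rcases ih (Fin.snoc ρ f) with h0 | hc'
        · exact absurd h0 (h f)
        · exact hc'
  | ex A ih =>
      intro ρ
      set S := {v : ℝ | ∃ d : I.Dom, v = Form.val I A (Fin.snoc ρ d)}
      obtain ⟨d⟩ := I.dom_nonempty
      have hne : S.Nonempty := ⟨_, d, rfl⟩
      have hbdd : BddAbove S :=
        ⟨1, by rintro x ⟨e, rfl⟩; exact (val_bounds hV I A _).2⟩
      by_cases h : ∃ e : I.Dom, c ≤ Form.val I A (Fin.snoc ρ e)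
      · obtain ⟨e, he⟩ := h
        right; exact le_trans he (le_csSup hbdd ⟨e, rfl⟩)
      · left
        push_neg at h
        refine le_antisymm (csSup_le hne ?_) ?_
        · rintro x ⟨f, rfl⟩
          rcases ih (Fin.snoc ρ f) with h0 | hc'
          · exact le_of_eq h0
          · exact absurd hc' (not_le.mpr (h f))
        · exact le_trans (val_bounds hV I A _).1 (le_csSup hbdd ⟨d, rfl⟩)

end GodelPaper
end
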